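/- Let P be a nonnegative real random variable and J a random variable with the Gamma distribution with integer shape n ≥ 1 and scale θ > 0, with P and J independent, and let β > 0. Then ℙ(P ≤ β·J) = ∑_{m=0}^{n−1} (1/m!)·E[(P/(θβ))^m · e^{−P/(θβ)}] exactly. -/

import Mathlib

open MeasureTheory ProbabilityTheory

/-- The density of the Gamma distribution with shape `k` and scale `θ`:
`x ↦ x^(k-1) * exp(-x/θ) / (Γ(k) * θ^k)` on `(0, ∞)`. -/
noncomputable def gammaDensity (k θ x : ℝ) : ℝ :=
  Set.indicator (Set.Ioi 0) (fun y => y ^ (k - 1) * Real.exp (-y / θ) / (Real.Gamma k * θ ^ k)) x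

/-- `J` has the Gamma distribution with shape `k` and scale `θ` under `μ`. -/
def IsGammaLaw {Ω : Type*} [MeasurableSpace Ω] (μ : Measure Ω) (J : Ω → ℝ) (k θ : ℝ) : Prop :=
  Measure.map J μ = volume.withDensity (fun x => ENNReal.ofReal (gammaDensity k θ x))

namespace GammaAux

open Real Set Filter Topology

lemma sum_deriv (n : ℕ) {θ : ℝ} (hθ : 0 < θ) (t : ℝ) :
    HasDerivAt (fun t : ℝ => ∑ m ∈ Finset.range (n+1), (t/θ)^m / m.factorial)
      ((1/θ) * ∑ m ∈ Finset.range n, (t/θ)^m / m.factorial) t := by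
  have h := fun m : ℕ => (((hasDerivAt_id t).div_const θ).pow m).div_const (m.factorial : ℝ)
  have H := HasDerivAt.fun_sum (fun m (_ : m ∈ Finset.range (n+1)) => h m)
  refine H.congr_deriv ?_
  symm
  rw [Finset.sum_range_succ', Finset.mul_sum]
  simp only [Nat.factorial_succ, Nat.cast_mul, Nat.factorial_zero, Nat.cast_one,
    Nat.add_sub_cancel, Nat.cast_add, Nat.cast_zero, zero_mul, zero_div, add_zero, id_eq]
  refine Finset.sum_congr rfl fun m _ => ?_
  have hm : ((m:ℝ) + 1) ≠ 0 := by positivity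
  have hfm : ((m.factorial : ℝ)) ≠ 0 := Nat.cast_ne_zero.mpr m.factorial_ne_zero
  field_simp

lemma core_integrableOn (k : ℕ) {θ a : ℝ} (hθ : 0 < θ) (ha : 0 ≤ a) :
    IntegrableOn (fun t : ℝ => t ^ k * Real.exp (-(t/θ)) / (k.factorial * θ ^ (k+1)))
      (Ioi a) := by
  have base : IntegrableOn (fun x : ℝ => x ^ ((k:ℝ)) * Real.exp (-(1/θ) * x ^ (1:ℝ))) (Ioi 0) :=
    integrableOn_rpow_mul_exp_neg_mul_rpow
      (lt_of_lt_of_le neg_one_lt_zero (Nat.cast_nonneg k)) one_pos (by positivity)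
  have base2 : IntegrableOn (fun x : ℝ => x ^ k * Real.exp (-(x/θ))) (Ioi 0) := by
    rw [← integrableOn_congr_fun (f := fun x : ℝ => x ^ ((k:ℝ)) * Real.exp (-(1/θ) * x ^ (1:ℝ)))
      ?_ measurableSet_Ioi]
    · exact base
    · intro x hx
      simp only [rpow_one, rpow_natCast]
      rw [show -(1/θ)*x = -(x/θ) by ring]
  exact (base2.mono_set (Ioi_subset_Ioi ha)).div_const _

lemma gamma_tail (n : ℕ) {θ : ℝ} (hθ : 0 < θ) {a : ℝ} (ha : 0 ≤ a) :
    ∫ t in Ioi a, t ^ n * Real.exp (-(t/θ)) / (n.factorial * θ ^ (n+1))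
      = Real.exp (-(a/θ)) * ∑ m ∈ Finset.range (n+1), (a/θ)^m / m.factorial := by
  set f' : ℝ → ℝ := fun t => t ^ n * Real.exp (-(t/θ)) / (n.factorial * θ ^ (n+1)) with hf'
  set f : ℝ → ℝ := fun t =>
    -(Real.exp (-(t/θ)) * ∑ m ∈ Finset.range (n+1), (t/θ)^m / m.factorial) with hf
  have hθ' : θ ≠ 0 := hθ.ne'
  have key : ∀ t, HasDerivAt f (f' t) t := by
    intro t
    have hE : HasDerivAt (fun t : ℝ => Real.exp (-(t/θ))) (-(1/θ) * Real.exp (-(t/θ))) t := by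
      have : HasDerivAt (fun t : ℝ => -(t/θ)) (-(1/θ)) t :=
        ((hasDerivAt_id t).div_const θ).neg
      simpa [mul_comm] using this.exp
    have hS := sum_deriv n hθ t
    have := (hE.fun_mul hS).fun_neg
    refine this.congr_deriv ?_
    symm
    rw [Finset.sum_range_succ]
    have hfn : ((n.factorial : ℝ)) ≠ 0 := Nat.cast_ne_zero.mpr n.factorial_ne_zero
    simp only [hf']
    rw [div_pow]
    field_simp
    ring
  have hint : IntegrableOn f' (Ioi a) := core_integrableOn n hθ ha
  have htt : Tendsto f atTop (𝓝 0) := by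
    have h0 : Tendsto (fun t : ℝ => t/θ) atTop atTop := tendsto_id.atTop_div_const hθ
    have h1 : ∀ m : ℕ, Tendsto (fun t : ℝ => (t/θ)^m * Real.exp (-(t/θ)) / m.factorial)
        atTop (𝓝 0) := by
      intro m
      have := (tendsto_pow_mul_exp_neg_atTop_nhds_zero m).comp h0
      simpa using this.div_const (m.factorial : ℝ)
    have h2 : Tendsto (fun t : ℝ =>
        ∑ m ∈ Finset.range (n+1), (t/θ)^m * Real.exp (-(t/θ)) / m.factorial) atTop (𝓝 0) := by
      have := tendsto_finset_sum (Finset.range (n+1)) (fun m _ => h1 m)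
      simpa using this
    have hfe : f = fun t : ℝ =>
        -(∑ m ∈ Finset.range (n+1), (t/θ)^m * Real.exp (-(t/θ)) / m.factorial) := by
      funext t
      simp only [hf, Finset.mul_sum, neg_inj]
      exact Finset.sum_congr rfl fun m _ => by ring
    rw [hfe]
    simpa using h2.neg
  have := integral_Ioi_of_hasDerivAt_of_tendsto' (fun x _ => key x) hint htt
  rw [this]
  simp only [hf, zero_sub, neg_neg]

lemma pow_mul_exp_neg_le (m : ℕ) {x : ℝ} (hx : 0 ≤ x) :
    x ^ m * Real.exp (-x) ≤ m.factorial := by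
  have h1 : x ^ m / m.factorial ≤ Real.exp x := by
    refine le_trans ?_ (Real.sum_le_exp_of_nonneg hx (m+1))
    exact Finset.single_le_sum (f := fun i => x^i / i.factorial)
      (fun i _ => by positivity) (Finset.self_mem_range_succ m)
  have hm : (0:ℝ) < m.factorial := by positivity
  rw [div_le_iff₀ hm] at h1
  rw [Real.exp_neg, ← div_eq_mul_inv, div_le_iff₀ (Real.exp_pos x)]
  linarith [h1]

lemma sum_exp_le_one (n : ℕ) {x : ℝ} (hx : 0 ≤ x) :
    Real.exp (-x) * ∑ m ∈ Finset.range n, x ^ m / m.factorial ≤ 1 := by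
  have h := Real.sum_le_exp_of_nonneg hx n
  calc Real.exp (-x) * ∑ m ∈ Finset.range n, x ^ m / m.factorial
      ≤ Real.exp (-x) * Real.exp x := mul_le_mul_of_nonneg_left h (Real.exp_nonneg _)
    _ = 1 := by rw [← Real.exp_add]; simp

lemma sum_exp_nonneg (n : ℕ) {x : ℝ} (hx : 0 ≤ x) :
    0 ≤ Real.exp (-x) * ∑ m ∈ Finset.range n, x ^ m / m.factorial :=
  mul_nonneg (Real.exp_nonneg _)
    (Finset.sum_nonneg fun i _ => div_nonneg (pow_nonneg hx i) (Nat.cast_nonneg _))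

end GammaAux

open GammaAux Set Filter in
theorem stmt_3 {Ω : Type*} [MeasurableSpace Ω] (μ : Measure Ω) [IsProbabilityMeasure μ]
    (P J : Ω → ℝ) (hPm : Measurable P) (hJm : Measurable J)
    (hPnn : ∀ ω, 0 ≤ P ω)
    (n : ℕ) (hn : 1 ≤ n) (θ β : ℝ) (hθ : 0 < θ) (hβ : 0 < β)
    (hJ : IsGammaLaw μ J (n : ℝ) θ)
    (hindep : IndepFun P J μ) :
    (μ {ω | P ω ≤ β * J ω}).toReal
      = ∑ m ∈ Finset.range n,
          (1 / (Nat.factorial m) : ℝ) *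
            ∫ ω, (P ω / (θ * β)) ^ m * Real.exp (-(P ω / (θ * β))) ∂μ := by
  obtain ⟨k, rfl⟩ : ∃ k, n = k + 1 := ⟨n - 1, (Nat.succ_pred_eq_of_pos hn).symm⟩
  have hJ' : Measure.map J μ
      = volume.withDensity (fun x => ENNReal.ofReal (gammaDensity ((k+1 : ℕ) : ℝ) θ x)) := hJ
  set c : ℝ := θ * β with hc
  have hc0 : 0 < c := mul_pos hθ hβ
  set g : ℝ → ℝ := fun p =>
    Real.exp (-(p/c)) * ∑ m ∈ Finset.range (k+1), (p/c)^m / m.factorial with hg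
  have hgm : Measurable g := by
    apply Measurable.mul
    · exact ((measurable_id.div_const c).neg).exp
    · exact Finset.measurable_sum _ fun m _ =>
        ((measurable_id.div_const c).pow_const m).div_const _
  have hprobJ : IsProbabilityMeasure (μ.map J) := Measure.isProbabilityMeasure_map hJm.aemeasurable
  have hprobP : IsProbabilityMeasure (μ.map P) := Measure.isProbabilityMeasure_map hPm.aemeasurable
  have hsm : MeasurableSet {q : ℝ × ℝ | q.1 ≤ β * q.2} :=
    measurableSet_le measurable_fst (measurable_snd.const_mul β)
  have hmap : μ.map (fun ω => (P ω, J ω)) = (μ.map P).prod (μ.map J) :=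
    (ProbabilityTheory.indepFun_iff_map_prod_eq_prod_map_map hPm.aemeasurable
      hJm.aemeasurable).mp hindep
  have e1 : μ {ω | P ω ≤ β * J ω} = ((μ.map P).prod (μ.map J)) {q : ℝ × ℝ | q.1 ≤ β * q.2} := by
    rw [← hmap, Measure.map_apply (hPm.prodMk hJm) hsm]
    rfl
  -- the inner measure computation
  have e2 : ∀ p : ℝ, 0 ≤ p →
      (μ.map J) (Prod.mk p ⁻¹' {q : ℝ × ℝ | q.1 ≤ β * q.2}) = ENNReal.ofReal (g p) := by
    intro p hp
    have hset : Prod.mk p ⁻¹' {q : ℝ × ℝ | q.1 ≤ β * q.2} = Ici (p/β) := by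
      ext j
      simp only [mem_preimage, mem_setOf_eq, mem_Ici, div_le_iff₀ hβ]
      rw [mul_comm]
    rw [hset, hJ', withDensity_apply _ measurableSet_Ici,
      ← MeasureTheory.restrict_Ioi_eq_restrict_Ici]
    have hpb : 0 ≤ p / β := by positivity
    have econg : ∀ x ∈ Ioi (p/β),
        ENNReal.ofReal (gammaDensity ((k+1 : ℕ) : ℝ) θ x)
          = ENNReal.ofReal (x ^ k * Real.exp (-(x/θ)) / (k.factorial * θ ^ (k+1))) := by
      intro x hx
      have hx0 : (0:ℝ) < x := lt_of_le_of_lt hpb hx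
      congr 1
      have hxmem : x ∈ Set.Ioi (0:ℝ) := hx0
      rw [gammaDensity, Set.indicator_of_mem hxmem]
      have h1 : x ^ (((k+1 : ℕ) : ℝ) - 1) = x ^ k := by
        rw [show ((k+1 : ℕ) : ℝ) - 1 = ((k : ℕ) : ℝ) by push_cast; ring, Real.rpow_natCast]
      have h2 : θ ^ ((k+1 : ℕ) : ℝ) = θ ^ (k+1 : ℕ) := Real.rpow_natCast θ (k+1)
      have h3 : Real.Gamma ((k+1 : ℕ) : ℝ) = (k.factorial : ℝ) := by
        rw [show ((k+1 : ℕ) : ℝ) = (k : ℝ) + 1 by push_cast; ring, Real.Gamma_nat_eq_factorial]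
      rw [h1, h2, h3, neg_div]
    rw [setLIntegral_congr_fun measurableSet_Ioi econg]
    rw [← MeasureTheory.ofReal_integral_eq_lintegral_ofReal (core_integrableOn k hθ hpb)
      ((ae_restrict_iff' measurableSet_Ioi).mpr (ae_of_all _ fun x hx => by
        have hx0 : (0:ℝ) < x := lt_of_le_of_lt hpb hx
        positivity))]
    rw [gamma_tail k hθ hpb]
    have hpd : p / β / θ = p / c := by rw [div_div, hc, mul_comm]
    rw [hpd]
  -- compute the lintegral
  have e3 : ((μ.map P).prod (μ.map J)) {q : ℝ × ℝ | q.1 ≤ β * q.2}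
      = ENNReal.ofReal (∫ ω, g (P ω) ∂μ) := by
    rw [Measure.prod_apply hsm]
    have hae : ∀ᵐ p ∂(μ.map P), 0 ≤ p :=
      (MeasureTheory.ae_map_iff hPm.aemeasurable measurableSet_Ici).mpr
        (ae_of_all _ hPnn)
    rw [lintegral_congr_ae (hae.mono fun p hp => e2 p hp)]
    rw [lintegral_map hgm.ennreal_ofReal hPm]
    rw [← MeasureTheory.ofReal_integral_eq_lintegral_ofReal]
    · -- Integrable
      refine (integrable_const (1:ℝ)).mono' ((hgm.comp hPm).aestronglyMeasurable)
        (ae_of_all _ fun ω => ?_)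
      have hx : 0 ≤ P ω / c := div_nonneg (hPnn ω) hc0.le
      have h01 : 0 ≤ g (P ω) := by
        simp only [hg]
        exact sum_exp_nonneg _ hx
      rw [Real.norm_eq_abs, abs_of_nonneg h01]
      simpa [hg] using sum_exp_le_one (k+1) hx
    · exact ae_of_all _ fun ω => by
        have hx : 0 ≤ P ω / c := div_nonneg (hPnn ω) hc0.le
        simp only [hg]; exact sum_exp_nonneg _ hx
  rw [e1, e3, ENNReal.toReal_ofReal]
  swap
  · refine integral_nonneg fun ω => ?_
    have hx : 0 ≤ P ω / c := div_nonneg (hPnn ω) hc0.le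
    simp only [hg]; exact sum_exp_nonneg _ hx
  -- final rearrangement
  have hterm : ∀ m : ℕ, Integrable
      (fun ω => (1 / (m.factorial : ℝ)) * ((P ω / c) ^ m * Real.exp (-(P ω / c)))) μ := by
    intro m
    refine (integrable_const (1:ℝ)).mono' ?_ (ae_of_all _ fun ω => ?_)
    · exact ((((hPm.div_const c).pow_const m).mul
        ((hPm.div_const c).neg.exp)).const_mul _).aestronglyMeasurable
    · have hx : 0 ≤ P ω / c := div_nonneg (hPnn ω) hc0.le
      have hb := pow_mul_exp_neg_le m hx
      have hnn : 0 ≤ (P ω / c) ^ m * Real.exp (-(P ω / c)) :=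
        mul_nonneg (pow_nonneg hx m) (Real.exp_nonneg _)
      rw [Real.norm_eq_abs, abs_of_nonneg (mul_nonneg (by positivity) hnn)]
      have hm : (0:ℝ) < m.factorial := by positivity
      rw [one_div, inv_mul_le_iff₀ hm, mul_one]
      exact hb
  have hrw : ∀ ω, g (P ω) = ∑ m ∈ Finset.range (k+1),
      (1 / (m.factorial : ℝ)) * ((P ω / c) ^ m * Real.exp (-(P ω / c))) := by
    intro ω
    simp only [hg]; rw [Finset.mul_sum]
    exact Finset.sum_congr rfl fun m _ => by ring
  rw [integral_congr_ae (ae_of_all _ hrw), integral_finset_sum _ (fun m _ => hterm m)]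
  exact Finset.sum_congr rfl fun m _ => integral_const_mul _ _
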